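/- arXiv:2301.13205 — 3 statements merged into one kernel-verified Lean document; each statement's English description precedes it below -/
import Mathlib

section
/- Let X be a countably infinite type of variables, and let words be elements of the free monoid on X ⊕ X (variables and their starred copies). A word identity u ≈ v holds in the involution monoid (ℕ × ℕ, *) (with (m,n)* = (n,m) and componentwise addition) if and only if it is balanced, i.e., for every letter x ∈ X ⊕ X, the number of occurrences of x in u equals the number of occurrences of x in v. -/
private lemma beq_bridge : (Sum.instBEq : BEq (ℕ ⊕ ℕ)) = instBEqOfDecidableEq := by
  refine congrArg BEq.mk ?_
  funext a b
  cases a with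
  | inl y => cases b with
    | inl x =>
      show ((Sum.inl y : ℕ⊕ℕ) == Sum.inl x) = _
      rw [show ((Sum.inl y : ℕ⊕ℕ) == Sum.inl x) = (y == x) from rfl, Bool.eq_iff_iff]
      simp
    | inr x => rfl
  | inr y => cases b with
    | inl x => rfl
    | inr x =>
      show ((Sum.inr y : ℕ⊕ℕ) == Sum.inr x) = _
      rw [show ((Sum.inr y : ℕ⊕ℕ) == Sum.inr x) = (y == x) from rfl, Bool.eq_iff_iff]
      simp

private lemma key (x : ℕ) : ∀ (w : List (ℕ ⊕ ℕ)),
    (w.map (Sum.elim (fun y => if y = x then ((1:ℕ),(0:ℕ)) else 0)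
      (fun y => ((if y = x then ((1:ℕ),(0:ℕ)) else 0) : ℕ × ℕ).swap))).sum =
    (@List.count _ instBEqOfDecidableEq (.inl x) w,
     @List.count _ instBEqOfDecidableEq (.inr x) w) := by
  intro w
  induction w with
  | nil => simp; rfl
  | cons b t ih =>
    cases b with
    | inl y =>
      by_cases hy : y = x <;>
        simp [List.count_cons, ih, hy, Prod.ext_iff, add_comm, beq_iff_eq]
    | inr y =>
      by_cases hy : y = x <;>
        simp [List.count_cons, ih, hy, Prod.ext_iff, add_comm, beq_iff_eq]

/-- A word identity `u ≈ v` over the alphabet `X ⊕ X` (variables and starred variables,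
with `X = ℕ` countably infinite) holds in the involution monoid `(ℕ × ℕ, *)` with
componentwise addition and `(m,n)* = (n,m)` if and only if it is balanced.
A substitution compatible with the involution is determined by a map `f : X → ℕ × ℕ`,
the starred variable `x*` being sent to `(f x).swap`. -/
theorem stmt1 (u v : List (ℕ ⊕ ℕ)) :
    (∀ f : ℕ → ℕ × ℕ,
        (u.map (Sum.elim f (fun x => (f x).swap))).sum =
        (v.map (Sum.elim f (fun x => (f x).swap))).sum) ↔
      (∀ a : ℕ ⊕ ℕ, u.count a = v.count a) := by
  rw [beq_bridge]
  constructor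
  · intro h a
    cases a with
    | inl x =>
      have := h (fun y => if y = x then (1,0) else 0)
      rw [key x u, key x v] at this
      exact (Prod.ext_iff.mp this).1
    | inr x =>
      have := h (fun y => if y = x then (1,0) else 0)
      rw [key x u, key x v] at this
      exact (Prod.ext_iff.mp this).2
  · intro h f
    have hp : u.Perm v := (@List.perm_iff_count _ instBEqOfDecidableEq _ u v).mpr h
    exact List.Perm.sum_eq (hp.map _)
end

section
/- Let u, v be words over an alphabet such that: u and v are permutations of each other (each letter occurs equally often); for all pairs of letters x ≠ y, ⟵occ_x(y,u) = ⟵occ_x(y,v) and ⟶occ_x(y,u) = ⟶occ_x(y,v). Suppose u = u₁·z·u₂ where z does not occur in u₂. Then v factors as v = v₁·z·v₂, where z does not occur in v₂ and v₂ is a permutation of u₂. -/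
/-- Number of occurrences of `y` strictly before the first occurrence of `x` in `w`. -/
def leftCount (x y : ℕ) (w : List ℕ) : ℕ :=
  (w.takeWhile (fun a => a ≠ x)).count y

/-- Number of occurrences of `y` strictly after the last occurrence of `x` in `w`. -/
def rightCount (x y : ℕ) (w : List ℕ) : ℕ :=
  leftCount x y w.reverse

lemma rightCount_eq (w₁ w₂ : List ℕ) (z a : ℕ) (hz : z ∉ w₂) :
    rightCount z a (w₁ ++ z :: w₂) = w₂.count a := by
  unfold rightCount leftCount
  rw [List.reverse_append, List.reverse_cons, List.append_assoc, List.singleton_append,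
    List.takeWhile_append_of_pos (by
      intro b hb
      simp only [List.mem_reverse] at hb
      simp only [ne_eq, decide_eq_true_eq]
      exact fun h => hz (h ▸ hb)),
    List.takeWhile_cons_of_neg (by simp), List.append_nil, List.count_reverse]

/-- Let `u`, `v` be words that are permutations of each other such that for any pair of
distinct letters `x ≠ y` the numbers of occurrences of `y` before the first occurrence
of `x` and after the last occurrence of `x` agree in `u` and `v`. If `u = u₁·z·u₂`
with `z` not occurring in `u₂`, then `v = v₁·z·v₂` with `z` not occurring in `v₂`
and `v₂` a permutation of `u₂`. -/
theorem stmt18 (u v u₁ u₂ : List ℕ) (z : ℕ)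
    (hbal : ∀ a : ℕ, u.count a = v.count a)
    (hL : ∀ x y : ℕ, x ≠ y → leftCount x y u = leftCount x y v)
    (hR : ∀ x y : ℕ, x ≠ y → rightCount x y u = rightCount x y v)
    (hu : u = u₁ ++ z :: u₂) (hz : z ∉ u₂) :
    ∃ v₁ v₂ : List ℕ, v = v₁ ++ z :: v₂ ∧ z ∉ v₂ ∧
      ∀ a : ℕ, v₂.count a = u₂.count a := by
  -- z occurs in v
  have hzu : z ∈ u := by rw [hu]; simp
  have hzv : z ∈ v := by
    have h0 : 0 < v.count z := by
      rw [← hbal]; exact List.count_pos_iff.mpr hzu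
    exact List.count_pos_iff.mp h0
  have hzvr : z ∈ v.reverse := by simpa using hzv
  set p : ℕ → Bool := fun a => a ≠ z with hp
  set T := v.reverse.takeWhile p with hT
  set D := v.reverse.dropWhile p with hD
  have hsplit : T ++ D = v.reverse := List.takeWhile_append_dropWhile (p := p) (l := v.reverse)
  have hDne : D ≠ [] := by
    intro h
    have : T = v.reverse := by rw [← hsplit, h, List.append_nil]
    have hzT : z ∈ T := this ▸ hzvr
    have := List.mem_takeWhile_imp hzT
    simp [hp] at this
  have hhead : D.head hDne = z := by
    have h0 := List.head_dropWhile_not p (l := v.reverse) (hD ▸ hDne)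
    have h1 : p (D.head hDne) = false := h0
    simpa [hp] using h1
  have hDeq : D = z :: D.tail := by
    conv_lhs => rw [← List.cons_head_tail hDne, hhead]
  have hvrev : v.reverse = T ++ z :: D.tail := by rw [← hsplit, ← hDeq]
  have hv : v = D.tail.reverse ++ z :: T.reverse := by
    have := congrArg List.reverse hvrev
    simpa [List.reverse_append] using this
  have hzT2 : z ∉ T.reverse := by
    intro h
    have := List.mem_takeWhile_imp (List.mem_reverse.mp h)
    simp [hp] at this
  refine ⟨D.tail.reverse, T.reverse, hv, hzT2, ?_⟩
  intro a
  by_cases ha : a = z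
  · subst ha
    rw [List.count_eq_zero.mpr hzT2, List.count_eq_zero.mpr hz]
  · have h1 : rightCount z a u = u₂.count a := hu ▸ rightCount_eq u₁ u₂ z a hz
    have h2 : rightCount z a v = T.reverse.count a := hv ▸ rightCount_eq _ _ z a hzT2
    rw [← h1, ← h2, hR z a (fun h => ha h.symm)]
end

section
/- For each word w over the alphabet {1,2} define Λ(w) = P^{ℓ}·K ∈ M₂(S) if w contains the letter 2 and w has a 1-2 left precedence of index ℓ (with convention Λ(w) = K if no 1 precedes the first 2), and Λ(w) = P^{|w|} if w contains only 1s, where P = [[s,0],[0,1]], K = [[0,1],[0,1]] over a commutative idempotent semiring S with s of infinite multiplicative order. Then Λ is multiplicative on concatenation: Λ(w·w') = Λ(w)·Λ(w') for all words w, w' over {1,2}, where we use K·P^m = K and K·K = K and the left-precedence of a concatenation: if w contains a 2 then lp(w·w') = lp(w), and if w = 1^m contains only 1s then the 1-2 left precedence index of w·w' is m plus that of w' (when w' contains a 2). -/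
/-- The matrix `Λ(w)` associated to a word `w` over `{1, 2}`: if `w` contains the
letter `2` and has a `1`-`2` left precedence of index `ℓ` (the number of `1`s before
the first `2`, with `Λ(w) = K` when `ℓ = 0`), then `Λ(w) = P^ℓ·K`; if `w` contains
only `1`s then `Λ(w) = P^{|w|}`. Here `P = [[s,0],[0,1]]` and `K = [[0,1],[0,1]]`. -/
def Lam {S : Type*} [CommSemiring S] (s : S) (w : List ℕ) :
    Matrix (Fin 2) (Fin 2) S :=
  if 2 ∈ w then
    (!![s, 0; 0, 1] : Matrix (Fin 2) (Fin 2) S) ^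
        ((w.takeWhile (fun a => a ≠ 2)).count 1) * !![0, 1; 0, 1]
  else (!![s, 0; 0, 1] : Matrix (Fin 2) (Fin 2) S) ^ w.length

lemma KmulP {S : Type*} [CommSemiring S] (s : S) :
    (!![0, 1; 0, 1] : Matrix (Fin 2) (Fin 2) S) * !![s, 0; 0, 1] = !![0, 1; 0, 1] := by
  ext i j; fin_cases i <;> fin_cases j <;>
    simp [Matrix.mul_apply, Fin.sum_univ_two]

lemma KmulK {S : Type*} [CommSemiring S] :
    (!![0, 1; 0, 1] : Matrix (Fin 2) (Fin 2) S) * !![0, 1; 0, 1] = !![0, 1; 0, 1] := by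
  ext i j; fin_cases i <;> fin_cases j <;>
    simp [Matrix.mul_apply, Fin.sum_univ_two]

lemma KmulPpow {S : Type*} [CommSemiring S] (s : S) (m : ℕ) :
    (!![0, 1; 0, 1] : Matrix (Fin 2) (Fin 2) S) * !![s, 0; 0, 1] ^ m = !![0, 1; 0, 1] := by
  induction m with
  | zero => simp
  | succ n ih => rw [pow_succ, ← mul_assoc, ih, KmulP]

/-- Over a commutative idempotent semiring `S` (`a + a = a`) containing an element `s`
of infinite multiplicative order, `Λ` is multiplicative on concatenation of words over
`{1, 2}`: `Λ(w·w') = Λ(w)·Λ(w')`. -/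
theorem stmt19 {S : Type*} [CommSemiring S] (hidem : ∀ a : S, a + a = a) (s : S)
    (hs : ∀ i j : ℕ, s ^ i = s ^ j → i = j)
    (w w' : List ℕ)
    (hw : ∀ a ∈ w, a = 1 ∨ a = 2) (hw' : ∀ a ∈ w', a = 1 ∨ a = 2) :
    Lam s (w ++ w') = Lam s w * Lam s w' := by
  by_cases h2 : 2 ∈ w
  · have hmem : 2 ∈ w ++ w' := List.mem_append_left _ h2
    have htw : (w ++ w').takeWhile (fun a => a ≠ 2) = w.takeWhile (fun a => a ≠ 2) := by
      rw [List.takeWhile_append, if_neg]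
      intro hlen
      have heq := (List.takeWhile_prefix (l := w) (fun a => a ≠ 2)).eq_of_length hlen
      rw [List.takeWhile_eq_self_iff] at heq
      exact absurd (heq 2 h2) (by simp)
    rw [Lam, Lam, if_pos hmem, if_pos h2, htw]
    by_cases h2' : 2 ∈ w'
    · rw [Lam, if_pos h2', mul_assoc, ← mul_assoc (!![0,1;0,1]), KmulPpow, KmulK]
    · rw [Lam, if_neg h2', mul_assoc, KmulPpow]
  · have hall : ∀ a ∈ w, a = 1 := fun a ha => (hw a ha).resolve_right (by rintro rfl; exact h2 ha)
    have hcount : w.count 1 = w.length := by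
      rw [List.count_eq_length]; intro a ha; exact (hall a ha).symm
    by_cases h2' : 2 ∈ w'
    · have hmem : 2 ∈ w ++ w' := List.mem_append_right _ h2'
      have htw : (w ++ w').takeWhile (fun a => a ≠ 2)
          = w ++ w'.takeWhile (fun a => a ≠ 2) := by
        apply List.takeWhile_append_of_pos
        intro a ha
        simp [hall a ha]
      rw [Lam, Lam, Lam, if_pos hmem, if_neg h2, if_pos h2', htw,
        List.count_append, hcount, pow_add, mul_assoc]
    · have hmem : 2 ∉ w ++ w' := by simp [h2, h2']
      rw [Lam, Lam, Lam, if_neg hmem, if_neg h2, if_neg h2',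
        List.length_append, pow_add]
end
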